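/- Let Ω ⊂ ℝ^d be a bounded measurable set, let Y = [0,1]^d, and let ϕ : ℝ^d × ℝ^d → ℝ be continuous, with ϕ(x, ·) being Y-periodic in its second argument for every x (i.e. ϕ(x, y + k) = ϕ(x, y) for all k ∈ ℤ^d), and with ϕ bounded on Ω × ℝ^d. Then lim_{ε→0⁺} ∫_Ω ϕ(x, x/ε) dx = ∫_Ω ∫_Y ϕ(x, y) dy dx. -/

import Mathlib

open MeasureTheory Filter Set Pointwise

namespace OscHelper


variable {d : ℕ}

lemma frac_add_floor (y : Fin d → ℝ) :
    ((fun i => Int.fract (y i)) + fun i => ((⌊y i⌋ : ℤ) : ℝ)) = y := by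
  funext i; simpa using Int.fract_add_floor (y i)

lemma frac_mem_Icc (y : Fin d → ℝ) :
    (fun i => Int.fract (y i)) ∈ Set.Icc (0 : Fin d → ℝ) 1 := by
  constructor
  · intro i; exact Int.fract_nonneg _
  · intro i; exact (Int.fract_lt_one _).le

lemma reduce {ϕ : (Fin d → ℝ) → (Fin d → ℝ) → ℝ}
    (hper : ∀ (x y : Fin d → ℝ) (k : Fin d → ℤ),
      ϕ x (y + fun i => (k i : ℝ)) = ϕ x y) (x y : Fin d → ℝ) :
    ϕ x y = ϕ x (fun i => Int.fract (y i)) := by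
  conv_lhs => rw [← frac_add_floor y]
  exact hper x _ (fun i => ⌊y i⌋)

lemma integral_cube_translate (f : (Fin d → ℝ) → ℝ)
    (hper : ∀ (y : Fin d → ℝ) (k : Fin d → ℤ), f (y + fun i => (k i : ℝ)) = f y)
    (c : Fin d → ℝ) :
    ∫ τ in Set.Icc (0 : Fin d → ℝ) 1, f (c + τ) = ∫ y in Set.Icc (0 : Fin d → ℝ) 1, f y := by
  set b := Pi.basisFun ℝ (Fin d) with hb
  set FD := ZSpan.fundamentalDomain b with hFDdef
  have hFDmeas : MeasurableSet FD := ZSpan.fundamentalDomain_measurableSet b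
  have hae : FD =ᵐ[volume] Set.Icc (0 : Fin d → ℝ) 1 := by
    apply MeasureTheory.ae_eq_of_subset_of_measure_ge
    · rw [hFDdef, ZSpan.fundamentalDomain_pi_basisFun, ← Set.pi_univ_Icc]
      exact Set.pi_mono fun i _ => Set.Ico_subset_Icc_self
    · rw [hFDdef, ZSpan.fundamentalDomain_pi_basisFun, volume_pi_pi, Real.volume_Icc_pi]
      simp [Real.volume_Ico]
    · exact hFDmeas.nullMeasurableSet
    · rw [Real.volume_Icc_pi]; simp
  have hFD : IsAddFundamentalDomain (Submodule.span ℤ (Set.range ⇑b)) FD volume :=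
    ZSpan.isAddFundamentalDomain b volume
  haveI : MeasurableVAdd (↥(Submodule.span ℤ (Set.range ⇑b))) (Fin d → ℝ) :=
    { measurable_const_vadd := fun g => show Measurable fun x : Fin d → ℝ => (g : Fin d → ℝ) + x from
        measurable_const_add _,
      measurable_vadd_const := fun x => show Measurable fun g : ↥(Submodule.span ℤ (Set.range ⇑b)) => (g : Fin d → ℝ) + x
        from measurable_subtype_coe.add_const x }
  haveI : VAddInvariantMeasure (↥(Submodule.span ℤ (Set.range ⇑b))) (Fin d → ℝ) volume :=
    ⟨fun g s _ => show volume ((fun x : Fin d → ℝ => (g : Fin d → ℝ) + x) ⁻¹' s) = volume s from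
      measure_preimage_add volume _ s⟩
  haveI : VAddCommClass (Fin d → ℝ) (↥(Submodule.span ℤ (Set.range ⇑b))) (Fin d → ℝ) :=
    ⟨fun a g x => by show a + (↑g + x) = ↑g + (a + x); ring⟩
  have hFD2 : IsAddFundamentalDomain (Submodule.span ℤ (Set.range ⇑b)) (c +ᵥ FD) volume :=
    hFD.vadd_of_comm c
  have hf : ∀ (g : Submodule.span ℤ (Set.range ⇑b)) (x : Fin d → ℝ), f (g +ᵥ x) = f x := by
    rintro ⟨g, hg⟩ x
    rw [(b.mem_span_iff_repr_mem ℤ g)] at hg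
    choose k hk using hg
    have hgk : g = fun i => (k i : ℝ) := by
      funext i
      have := hk i
      simpa [hb, Pi.basisFun_repr, algebraMap_int_eq] using this.symm
    show f (g + x) = f x
    rw [hgk, add_comm]
    exact hper x k
  have h1 : ∫ τ in Set.Icc (0 : Fin d → ℝ) 1, f (c + τ) = ∫ τ in FD, f (c + τ) :=
    setIntegral_congr_set hae.symm
  have h2 : ∫ τ in FD, f (c + τ) = ∫ u in (c +ᵥ FD), f u := by
    have hpre : (fun τ => c + τ) ⁻¹' (c +ᵥ FD) = FD := by
      ext τ
      simp [Set.mem_vadd_set_iff_neg_vadd_mem, vadd_eq_add]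
    have h2' := (measurePreserving_add_left volume c).setIntegral_preimage_emb
      (MeasurableEquiv.addLeft c).measurableEmbedding f (c +ᵥ FD)
    rw [hpre] at h2'
    exact h2'
  have h3 : ∫ u in (c +ᵥ FD), f u = ∫ u in FD, f u := hFD2.setIntegral_eq hFD hf
  have h4 : ∫ u in FD, f u = ∫ y in Set.Icc (0 : Fin d → ℝ) 1, f y :=
    setIntegral_congr_set hae
  rw [h1, h2, h3, h4]



variable {d : ℕ}

lemma indicator_translate (Ω : Set (Fin d → ℝ)) (hm : MeasurableSet Ω)
    (hvol : volume Ω ≠ ⊤) {δ : ℝ} (hδ : 0 < δ) :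
    ∃ η > 0, η ≤ 1 ∧ ∀ t : Fin d → ℝ, ‖t‖ < η →
      (∫ u, |Ω.indicator (fun _ => (1:ℝ)) u - Ω.indicator (fun _ => (1:ℝ)) (u - t)|) ≤ δ := by
  set f : (Fin d → ℝ) → ℝ := Ω.indicator (fun _ => (1:ℝ)) with hf
  have hfint : Integrable f volume := by
    refine (integrableOn_const hvol).integrable_indicator hm
  obtain ⟨g, hg_supp, hg_close, hg_cont, hg_int⟩ :=
    hfint.exists_hasCompactSupport_integral_sub_le (by positivity : (0:ℝ) < δ/4)
  set S : Set (Fin d → ℝ) := Metric.cthickening 1 (tsupport g) with hS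
  have hScompact : IsCompact S := hg_supp.cthickening
  have hSvol : volume S < ⊤ := hScompact.measure_lt_top
  have hSmeas : MeasurableSet S := Metric.isClosed_cthickening.measurableSet
  set S₂ : Set (Fin d → ℝ) := Metric.cthickening 2 (tsupport g) with hS2
  have hS2compact : IsCompact S₂ := hg_supp.cthickening
  have huc := hS2compact.uniformContinuousOn_of_continuous hg_cont.continuousOn
  rw [Metric.uniformContinuousOn_iff] at huc
  set c : ℝ := δ / (4 * ((volume S).toReal + 1)) with hc
  have hcpos : 0 < c := by
    have : (0:ℝ) ≤ (volume S).toReal := ENNReal.toReal_nonneg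
    positivity
  obtain ⟨η₀, hη₀pos, hη₀⟩ := huc c hcpos
  refine ⟨min η₀ 1, lt_min hη₀pos one_pos, min_le_right _ _, fun t ht => ?_⟩
  have ht1 : ‖t‖ ≤ 1 := le_of_lt (lt_of_lt_of_le ht (min_le_right _ _))
  have htη₀ : ‖t‖ < η₀ := lt_of_lt_of_le ht (min_le_left _ _)
  -- integrability of the pieces
  have hmp : MeasurePreserving (fun u : Fin d → ℝ => u - t) volume volume :=
    measurePreserving_sub_right volume t
  have hfshift : Integrable (fun u : Fin d → ℝ => f (u - t)) volume :=
    hfint.comp_sub_right t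
  have hgshift : Integrable (fun u : Fin d → ℝ => g (u - t)) volume :=
    hg_int.comp_sub_right t
  have hint1 : Integrable (fun u : Fin d → ℝ => |f u - g u|) volume := (hfint.sub hg_int).abs
  have hint2 : Integrable (fun u : Fin d → ℝ => |g u - g (u - t)|) volume :=
    (hg_int.sub hgshift).abs
  have hint3 : Integrable (fun u : Fin d → ℝ => |g (u - t) - f (u - t)|) volume :=
    (hgshift.sub hfshift).abs
  have hLHSint : Integrable (fun u : Fin d → ℝ => |f u - f (u - t)|) volume :=
    (hfint.sub hfshift).abs
  have hptw : ∀ u : Fin d → ℝ,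
      |f u - f (u - t)| ≤ |f u - g u| + |g u - g (u - t)| + |g (u - t) - f (u - t)| := by
    intro u
    calc |f u - f (u - t)|
        = |(f u - g u) + (g u - g (u - t)) + (g (u - t) - f (u - t))| := by ring_nf
      _ ≤ _ := by
          refine le_trans (abs_add_le _ _) ?_
          exact add_le_add (abs_add_le _ _) le_rfl
  have hint12 : Integrable (fun u : Fin d → ℝ => |f u - g u| + |g u - g (u - t)|) volume :=
    hint1.add hint2
  have hmono : (∫ u, |f u - f (u - t)|) ≤
      ∫ u, (|f u - g u| + |g u - g (u - t)| + |g (u - t) - f (u - t)|) :=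
    integral_mono hLHSint (hint12.add hint3) hptw
  rw [integral_add hint12 hint3, integral_add hint1 hint2] at hmono
  have h3 : (∫ u, |g (u - t) - f (u - t)|) = ∫ u, |g u - f u| :=
    integral_sub_right_eq_self (fun u => |g u - f u|) t
  have h1 : (∫ u, |f u - g u|) ≤ δ / 4 := by
    have : (fun u => |f u - g u|) = fun u => ‖f u - g u‖ := by
      funext u; rw [Real.norm_eq_abs]
    rw [this]; exact hg_close
  have h3' : (∫ u, |g (u - t) - f (u - t)|) ≤ δ / 4 := by
    rw [h3]
    have : (fun u => |g u - f u|) = fun u => ‖f u - g u‖ := by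
      funext u; rw [Real.norm_eq_abs, abs_sub_comm]
    rw [this]; exact hg_close
  -- middle term
  have hzero : ∀ u ∉ S, |g u - g (u - t)| = 0 := by
    intro u hu
    have hgu : g u = 0 := by
      apply image_eq_zero_of_notMem_tsupport
      intro hmem
      exact hu (Metric.self_subset_cthickening _ hmem)
    have hgut : g (u - t) = 0 := by
      apply image_eq_zero_of_notMem_tsupport
      intro hmem
      apply hu
      rw [hS, Metric.mem_cthickening_iff]
      calc EMetric.infEdist u (tsupport g) ≤ edist u (u - t) :=
            EMetric.infEdist_le_edist_of_mem hmem
        _ ≤ ENNReal.ofReal 1 := by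
            rw [edist_dist, dist_self_sub_right]
            exact ENNReal.ofReal_le_ofReal ht1
    rw [hgu, hgut, sub_zero, abs_zero]
  have h2 : (∫ u, |g u - g (u - t)|) ≤ δ / 4 := by
    rw [← setIntegral_eq_integral_of_forall_compl_eq_zero hzero]
    have hbound : ∀ u ∈ S, ‖|g u - g (u - t)|‖ ≤ c := by
      intro u hu
      rw [Real.norm_eq_abs, abs_abs]
      have huS2 : u ∈ S₂ := Metric.cthickening_mono (by norm_num) _ hu
      have hutS2 : u - t ∈ S₂ := by
        rw [hS2, Metric.mem_cthickening_iff]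
        calc EMetric.infEdist (u - t) (tsupport g)
            ≤ EMetric.infEdist u (tsupport g) + edist (u - t) u :=
              EMetric.infEdist_le_infEdist_add_edist
          _ ≤ ENNReal.ofReal 1 + ENNReal.ofReal 1 := by
              apply add_le_add
              · rw [hS, Metric.mem_cthickening_iff] at hu; exact hu
              · rw [edist_dist, dist_self_sub_left]
                exact ENNReal.ofReal_le_ofReal ht1
          _ = ENNReal.ofReal 2 := by rw [← ENNReal.ofReal_add] <;> norm_num
      have := hη₀ u huS2 (u - t) hutS2 (by rwa [dist_self_sub_right])
      rw [Real.dist_eq] at this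
      exact this.le
    have habs : (∫ u in S, |g u - g (u - t)|) ≤ ‖∫ u in S, |g u - g (u - t)|‖ := by
      rw [Real.norm_eq_abs]; exact le_abs_self _
    calc (∫ u in S, |g u - g (u - t)|) ≤ ‖∫ u in S, |g u - g (u - t)|‖ := habs
      _ ≤ c * (volume S).toReal := norm_setIntegral_le_of_norm_le_const hSvol hbound
      _ ≤ δ / 4 := by
          rw [hc, div_mul_eq_mul_div, div_le_div_iff₀ (by positivity) (by norm_num)]
          nlinarith [ENNReal.toReal_nonneg (a := volume S)]
  linarith


lemma integrable_indicator_of_bound {d : ℕ} (Ω : Set (Fin d → ℝ)) (hm : MeasurableSet Ω)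
    (hvol : volume Ω ≠ ⊤) (h : (Fin d → ℝ) → ℝ) (hmeas : AEStronglyMeasurable h volume)
    (M : ℝ) (hb : ∀ x ∈ Ω, |h x| ≤ M) : Integrable (Ω.indicator h) volume := by
  refine (Measure.integrableOn_of_bounded (M := M) hvol hmeas ?_).integrable_indicator hm
  refine (ae_restrict_iff' hm).2 (ae_of_all _ ?_)
  intro x hx
  rw [Real.norm_eq_abs]
  exact hb x hx

end OscHelper

open OscHelper

/-- Averaging of rapidly oscillating periodic functions (two-scale limit of an
admissible oscillating test function is its cell average): for `Ω ⊆ ℝ^d` bounded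
and measurable and `ϕ(x,y)` continuous, `Y`-periodic in `y` (`Y = [0,1]^d`), and
bounded on `Ω × ℝ^d`,
`∫_Ω ϕ(x, x/ε) dx → ∫_Ω ∫_Y ϕ(x,y) dy dx` as `ε → 0⁺`. -/
theorem oscillating_average_tendsto_cell_average
    (d : ℕ) (Ω : Set (Fin d → ℝ)) (hΩmeas : MeasurableSet Ω)
    (hΩbd : Bornology.IsBounded Ω)
    (ϕ : (Fin d → ℝ) → (Fin d → ℝ) → ℝ)
    (hcont : Continuous (Function.uncurry ϕ))
    (hper : ∀ (x y : Fin d → ℝ) (k : Fin d → ℤ),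
      ϕ x (y + fun i => (k i : ℝ)) = ϕ x y)
    (Cb : ℝ) (hbd : ∀ x ∈ Ω, ∀ y : Fin d → ℝ, |ϕ x y| ≤ Cb) :
    Tendsto (fun ε : ℝ => ∫ x in Ω, ϕ x (ε⁻¹ • x))
      (nhdsWithin 0 (Set.Ioi 0))
      (nhds (∫ x in Ω, ∫ y in Set.Icc (0 : Fin d → ℝ) 1, ϕ x y)) := by
  classical
  obtain ⟨R₀, hR₀⟩ := hΩbd.subset_closedBall (0 : Fin d → ℝ)
  set R : ℝ := max R₀ 0 with hRdef
  have hR : Ω ⊆ Metric.closedBall 0 R :=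
    hR₀.trans (Metric.closedBall_subset_closedBall (le_max_left _ _))
  have hRnn : (0:ℝ) ≤ R := le_max_right _ _
  set Y : Set (Fin d → ℝ) := Set.Icc 0 1 with hYdef
  have hYmeas : MeasurableSet Y := measurableSet_Icc
  have hYvol : volume Y = 1 := by rw [hYdef, Real.volume_Icc_pi]; simp
  set K : Set ((Fin d → ℝ) × (Fin d → ℝ)) := Metric.closedBall 0 (R+1) ×ˢ Y with hKdef
  have hK : IsCompact K := (isCompact_closedBall _ _).prod isCompact_Icc
  obtain ⟨M₀, hM₀⟩ := hK.exists_bound_of_continuousOn hcont.continuousOn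
  set M : ℝ := max M₀ 0 with hMdef
  have hMnn : (0:ℝ) ≤ M := le_max_right _ _
  have hM : ∀ x : Fin d → ℝ, ‖x‖ ≤ R + 1 → ∀ y, |ϕ x y| ≤ M := by
    intro x hx y
    rw [reduce hper x y]
    have hmem : (x, fun i => Int.fract (y i)) ∈ K :=
      ⟨by rwa [Metric.mem_closedBall, dist_zero_right], frac_mem_Icc y⟩
    have h := hM₀ _ hmem
    rw [Function.uncurry] at h
    exact le_trans (by rwa [Real.norm_eq_abs] at h) (le_max_left _ _)
  have hΩball : ∀ x ∈ Ω, ‖x‖ ≤ R + 1 := by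
    intro x hx
    have := hR hx
    rw [Metric.mem_closedBall, dist_zero_right] at this
    linarith
  have hvolΩ : volume Ω < ⊤ := (measure_mono hR).trans_lt measure_closedBall_lt_top
  set μΩ : ℝ := (volume Ω).toReal with hμΩdef
  have hμΩnn : (0:ℝ) ≤ μΩ := ENNReal.toReal_nonneg
  have hucK := hK.uniformContinuousOn_of_continuous hcont.continuousOn
  rw [Metric.uniformContinuousOn_iff] at hucK
  rw [Metric.tendsto_nhdsWithin_nhds]
  intro δ hδ
  set δ₁ : ℝ := δ / (3 * (μΩ + 1)) with hδ₁def
  have hδ₁ : 0 < δ₁ := by positivity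
  obtain ⟨η₁, hη₁pos, hη₁⟩ := hucK δ₁ hδ₁
  set δ₂ : ℝ := δ / (3 * (M + 1)) with hδ₂def
  have hδ₂ : 0 < δ₂ := by positivity
  obtain ⟨η₂, hη₂pos, hη₂le1, hη₂⟩ := OscHelper.indicator_translate Ω hΩmeas hvolΩ.ne hδ₂
  refine ⟨min (min η₁ η₂) 1, by positivity, ?_⟩
  intro ε hεmem hεdist
  have hεpos : (0:ℝ) < ε := hεmem
  have hεne : ε ≠ 0 := ne_of_gt hεpos
  rw [Real.dist_eq, sub_zero, abs_of_pos hεpos] at hεdist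
  have hε1 : ε ≤ 1 := le_of_lt (lt_of_lt_of_le hεdist (min_le_right _ _))
  have hεη₁ : ε < η₁ := lt_of_lt_of_le hεdist ((min_le_left _ _).trans (min_le_left _ _))
  have hεη₂ : ε < η₂ := lt_of_lt_of_le hεdist ((min_le_left _ _).trans (min_le_right _ _))
  set F : (Fin d → ℝ) → (Fin d → ℝ) → ℝ := fun x τ => ϕ x (ε⁻¹ • x + τ) with hFdef
  have hFcont : Continuous (Function.uncurry F) := by
    have h : Continuous fun p : (Fin d → ℝ) × (Fin d → ℝ) =>
        Function.uncurry ϕ (p.1, ε⁻¹ • p.1 + p.2) :=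
      hcont.comp (continuous_fst.prodMk ((continuous_fst.const_smul ε⁻¹).add continuous_snd))
    exact h
  haveI hfinΩ : IsFiniteMeasure (volume.restrict Ω) :=
    ⟨by rwa [Measure.restrict_apply_univ]⟩
  haveI hfinY : IsFiniteMeasure (volume.restrict Y) :=
    ⟨by rw [Measure.restrict_apply_univ, hYvol]; exact ENNReal.one_lt_top⟩
  have hFint : Integrable (Function.uncurry F)
      ((volume.restrict Ω).prod (volume.restrict Y)) := by
    refine Integrable.mono' (integrable_const M) hFcont.aestronglyMeasurable ?_
    rw [Measure.prod_restrict]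
    refine (ae_restrict_iff' (hΩmeas.prod hYmeas)).2 (ae_of_all _ ?_)
    rintro ⟨x, τ⟩ ⟨hx, -⟩
    rw [Function.uncurry, Real.norm_eq_abs]
    exact hM x (hΩball x hx) _
  have hswap : (∫ x in Ω, ∫ τ in Y, F x τ) = ∫ τ in Y, ∫ x in Ω, F x τ :=
    integral_integral_swap hFint
  have hTtarget : (∫ x in Ω, ∫ y in Y, ϕ x y) = ∫ τ in Y, ∫ x in Ω, F x τ := by
    rw [← hswap]
    refine integral_congr_ae (ae_of_all _ fun x => ?_)
    exact (integral_cube_translate (ϕ x) (fun y k => hper x y k) (ε⁻¹ • x)).symm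
  have hJint : Integrable (fun τ => ∫ x in Ω, F x τ) (volume.restrict Y) := by
    have := (hFint.swap).integral_prod_left
    exact this
  set I : ℝ := ∫ x in Ω, ϕ x (ε⁻¹ • x) with hIdef
  -- Key per-τ bound.
  have hkey : ∀ τ ∈ Y, ‖I - ∫ x in Ω, F x τ‖ ≤ μΩ * δ₁ + M * δ₂ := by
    intro τ hτ
    set t : Fin d → ℝ := ε • τ with htdef
    have hτnorm : ‖τ‖ ≤ 1 := by
      rw [pi_norm_le_iff_of_nonneg zero_le_one]
      intro i
      rw [Real.norm_eq_abs, abs_le]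
      have h0 : (0 : Fin d → ℝ) i ≤ τ i := hτ.1 i
      have h1 : τ i ≤ (1 : Fin d → ℝ) i := hτ.2 i
      rw [Pi.zero_apply] at h0
      rw [Pi.one_apply] at h1
      exact ⟨by linarith, h1⟩
    have htnorm : ‖t‖ ≤ ε := by
      rw [htdef, norm_smul, Real.norm_eq_abs, abs_of_pos hεpos]
      nlinarith [norm_nonneg τ]
    have ht1 : ‖t‖ ≤ 1 := htnorm.trans hε1
    have htη₁ : ‖t‖ < η₁ := lt_of_le_of_lt htnorm hεη₁
    have htη₂ : ‖t‖ < η₂ := lt_of_le_of_lt htnorm hεη₂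
    set G₀ : (Fin d → ℝ) → ℝ := Ω.indicator (fun x => ϕ x (ε⁻¹ • x)) with hG₀def
    set G₁ : (Fin d → ℝ) → ℝ := Ω.indicator (fun x => F x τ) with hG₁def
    set G₂ : (Fin d → ℝ) → ℝ :=
      fun u => Ω.indicator (fun _ => ϕ (u - t) (ε⁻¹ • u)) (u - t) with hG₂def
    have hshiftarg : ∀ u : Fin d → ℝ, ε⁻¹ • (u - t) + τ = ε⁻¹ • u := by
      intro u
      rw [htdef, smul_sub, smul_smul, inv_mul_cancel₀ hεne, one_smul, sub_add_cancel]
    have hG₁shift : ∀ u : Fin d → ℝ, G₁ (u - t) = G₂ u := by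
      intro u
      by_cases h : u - t ∈ Ω
      · rw [hG₁def, hG₂def]
        simp only [Set.indicator_of_mem h, hFdef]
        rw [hshiftarg u]
      · rw [hG₁def, hG₂def]
        simp only [Set.indicator_of_notMem h]
    have hG₀int : Integrable G₀ volume := by
      refine integrable_indicator_of_bound Ω hΩmeas hvolΩ.ne _ ?_ M ?_
      · exact (hcont.comp (continuous_id.prodMk
          (continuous_id.const_smul ε⁻¹))).aestronglyMeasurable
      · intro x hx; exact hM x (hΩball x hx) _
    have hG₁int : Integrable G₁ volume := by
      refine integrable_indicator_of_bound Ω hΩmeas hvolΩ.ne _ ?_ M ?_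
      · exact (hcont.comp (continuous_id.prodMk
          ((continuous_id.const_smul ε⁻¹).add continuous_const))).aestronglyMeasurable
      · intro x hx; exact hM x (hΩball x hx) _
    have hG₂int : Integrable G₂ volume := by
      have : G₂ = fun u => G₁ (u - t) := funext fun u => (hG₁shift u).symm
      rw [this]
      exact hG₁int.comp_sub_right t
    have hI' : I = ∫ u, G₀ u := (integral_indicator hΩmeas).symm
    have hJ' : (∫ x in Ω, F x τ) = ∫ u, G₂ u := by
      calc (∫ x in Ω, F x τ) = ∫ u, G₁ u := (integral_indicator hΩmeas).symm
        _ = ∫ u, G₁ (u - t) := (integral_sub_right_eq_self G₁ t).symm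
        _ = ∫ u, G₂ u := integral_congr_ae (ae_of_all _ hG₁shift)
    set ind : (Fin d → ℝ) → ℝ := Ω.indicator (fun _ => (1:ℝ)) with hinddef
    have hindint : Integrable ind volume :=
      (integrableOn_const hvolΩ.ne).integrable_indicator hΩmeas
    have hindshift : Integrable (fun u : Fin d → ℝ => ind (u - t)) volume :=
      hindint.comp_sub_right t
    set B : (Fin d → ℝ) → ℝ :=
      fun u => Ω.indicator (fun _ => δ₁) u + M * |ind u - ind (u - t)| with hBdef
    have hptw : ∀ u : Fin d → ℝ, ‖G₀ u - G₂ u‖ ≤ B u := by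
      intro u
      rw [Real.norm_eq_abs, hBdef, hG₀def, hG₂def, hinddef]
      by_cases h1 : u ∈ Ω <;> by_cases h2 : u - t ∈ Ω
      · simp only [Set.indicator_of_mem h1, Set.indicator_of_mem h2, sub_self, abs_zero,
          mul_zero, add_zero]
        -- uniform continuity case
        rw [reduce hper u (ε⁻¹ • u), reduce hper (u - t) (ε⁻¹ • u)]
        have hmem1 : (u, fun i => Int.fract ((ε⁻¹ • u) i)) ∈ K :=
          ⟨by rw [Metric.mem_closedBall, dist_zero_right]; exact hΩball u h1,
            frac_mem_Icc _⟩
        have hmem2 : ((u - t), fun i => Int.fract ((ε⁻¹ • u) i)) ∈ K :=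
          ⟨by rw [Metric.mem_closedBall, dist_zero_right]; exact hΩball (u - t) h2,
            frac_mem_Icc _⟩
        have hdist : dist (u, fun i => Int.fract ((ε⁻¹ • u) i))
            ((u - t), fun i => Int.fract ((ε⁻¹ • u) i)) < η₁ := by
          rw [Prod.dist_eq]
          simp only [dist_self]
          rw [dist_self_sub_right]
          exact max_lt htη₁ hη₁pos
        have := hη₁ _ hmem1 _ hmem2 hdist
        rw [Function.uncurry, Function.uncurry, Real.dist_eq] at this
        exact this.le
      · simp only [Set.indicator_of_mem h1, Set.indicator_of_notMem h2, sub_zero]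
        have : |ϕ u (ε⁻¹ • u)| ≤ M := hM u (hΩball u h1) _
        rw [abs_one, mul_one]
        linarith [hδ₁.le]
      · simp only [Set.indicator_of_notMem h1, Set.indicator_of_mem h2, zero_sub, abs_neg]
        have : |ϕ (u - t) (ε⁻¹ • u)| ≤ M := hM (u - t) (hΩball (u - t) h2) _
        rw [abs_one, mul_one, zero_add]
        linarith
      · simp only [Set.indicator_of_notMem h1, Set.indicator_of_notMem h2, sub_self,
          abs_zero, mul_zero, add_zero, zero_add, abs_nonneg]
        positivity
    have hBint1 : Integrable (Ω.indicator fun _ : Fin d → ℝ => δ₁) volume :=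
      (integrableOn_const hvolΩ.ne).integrable_indicator hΩmeas
    have hBint2 : Integrable (fun u : Fin d → ℝ => M * |ind u - ind (u - t)|) volume :=
      ((hindint.sub hindshift).abs).const_mul M
    have hBint : Integrable B volume := hBint1.add hBint2
    have hnormint : Integrable (fun u : Fin d → ℝ => ‖G₀ u - G₂ u‖) volume :=
      (hG₀int.sub hG₂int).norm
    have hIJ : ‖I - ∫ x in Ω, F x τ‖ ≤ ∫ u, B u := by
      rw [hI', hJ', ← integral_sub hG₀int hG₂int]
      exact (norm_integral_le_integral_norm _).trans (integral_mono hnormint hBint hptw)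
    have hBval : (∫ u, B u) ≤ μΩ * δ₁ + M * δ₂ := by
      rw [hBdef]
      rw [integral_add hBint1 hBint2, integral_indicator_const, integral_const_mul]
      · have hDD : (∫ u, |ind u - ind (u - t)|) ≤ δ₂ := hη₂ t htη₂
        have hDDnn : (0:ℝ) ≤ ∫ u, |ind u - ind (u - t)| :=
          integral_nonneg fun u => abs_nonneg _
        have : M * (∫ u, |ind u - ind (u - t)|) ≤ M * δ₂ :=
          mul_le_mul_of_nonneg_left hDD hMnn
        simp only [smul_eq_mul, measureReal_def, ← hμΩdef]
        linarith
      · exact hΩmeas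
    exact hIJ.trans hBval
  -- Assemble.
  have hIconst : (∫ τ in Y, I) = I := by
    rw [setIntegral_const, measureReal_def, hYvol]
    simp
  have hsub : (∫ τ in Y, (I - ∫ x in Ω, F x τ)) =
      I - ∫ τ in Y, ∫ x in Ω, F x τ := by
    rw [integral_sub (integrable_const I) hJint, hIconst]
  have hIT : I - (∫ x in Ω, ∫ y in Y, ϕ x y) = ∫ τ in Y, (I - ∫ x in Ω, F x τ) := by
    rw [hTtarget]
    exact hsub.symm
  rw [Real.dist_eq]
  have hfinal : |I - (∫ x in Ω, ∫ y in Y, ϕ x y)| ≤ μΩ * δ₁ + M * δ₂ := by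
    rw [hIT]
    have := norm_setIntegral_le_of_norm_le_const
      (by rw [hYvol]; exact ENNReal.one_lt_top) hkey
    rw [measureReal_def, hYvol] at this
    simpa [Real.norm_eq_abs] using this
  have hb1 : μΩ * δ₁ ≤ δ / 3 := by
    rw [hδ₁def, mul_comm, div_mul_eq_mul_div, div_le_div_iff₀ (by positivity) (by norm_num)]
    nlinarith
  have hb2 : M * δ₂ ≤ δ / 3 := by
    rw [hδ₂def, mul_comm, div_mul_eq_mul_div, div_le_div_iff₀ (by positivity) (by norm_num)]
    nlinarith
  calc |I - (∫ x in Ω, ∫ y in Y, ϕ x y)| ≤ μΩ * δ₁ + M * δ₂ := hfinal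
    _ ≤ δ / 3 + δ / 3 := add_le_add hb1 hb2
    _ < δ := by linarith
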